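/- Let $2 \leq a < d$ be integers with $d \geq a+2$, let $R = k[x^d, x^a y^{d-a}, y^d]$ and $Q = (x^d, y^d)$. Then the reduction number $r_Q(R_+)$ equals $d/\gcd(a,d) - 1$. -/
import Mathlib

open MvPolynomial

private lemma rn_div_gcd_le (a d t n : ℕ) (hd : 0 < d) (ht : 0 < t) (htn : t ≤ n + 1)
    (hdvd : d ∣ a * t) : d / Nat.gcd a d ≤ n + 1 := by
  set g := Nat.gcd a d with hg
  have hgpos : 0 < g := Nat.gcd_pos_of_pos_right a hd
  have hgd : g ∣ d := Nat.gcd_dvd_right a d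
  have hga : g ∣ a := Nat.gcd_dvd_left a d
  have hcop : Nat.Coprime (a / g) (d / g) := Nat.coprime_div_gcd_div_gcd hgpos
  have h1 : d / g ∣ (a / g) * t := by
    have h2 : g * (d / g) ∣ g * ((a / g) * t) := by
      rw [Nat.mul_div_cancel' hgd, ← mul_assoc, Nat.mul_div_cancel' hga]
      exact hdvd
    exact (mul_dvd_mul_iff_left (by omega : g ≠ 0)).mp h2
  have h2 : d / g ∣ t := (Nat.Coprime.dvd_of_dvd_mul_left hcop.symm
    (by rwa [mul_comm] at h1 ⊢))
  exact le_trans (Nat.le_of_dvd ht h2) htn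

private lemma rn_closure_form {k : Type*} [Field k] (a d : ℕ)
    (p : MvPolynomial (Fin 2) k)
    (hp : p ∈ Submonoid.closure
      {(X 0 : MvPolynomial (Fin 2) k) ^ d, X 0 ^ a * X 1 ^ (d - a), X 1 ^ d}) :
    ∃ α β γ : ℕ, p = monomial
      (Finsupp.single 0 (α * d + β * a) + Finsupp.single 1 (β * (d - a) + γ * d)) (1 : k) := by
  induction hp using Submonoid.closure_induction with
  | mem x hx =>
      simp only [Set.mem_insert_iff, Set.mem_singleton_iff] at hx
      rcases hx with rfl | rfl | rfl
      · exact ⟨1, 0, 0, by simp [X_pow_eq_monomial]⟩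
      · exact ⟨0, 1, 0, by
          rw [X_pow_eq_monomial, X_pow_eq_monomial, monomial_mul, one_mul]; simp⟩
      · exact ⟨0, 0, 1, by simp [X_pow_eq_monomial]⟩
  | one => exact ⟨0, 0, 0, by simp⟩
  | mul x y hxm hym hx hy =>
      obtain ⟨α, β, γ, rfl⟩ := hx
      obtain ⟨α', β', γ', rfl⟩ := hy
      refine ⟨α + α', β + β', γ + γ', ?_⟩
      have e1 : (α + α') * d + (β + β') * a = (α * d + β * a) + (α' * d + β' * a) := by ring
      have e2 : (β + β') * (d - a) + (γ + γ') * d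
          = (β * (d - a) + γ * d) + (β' * (d - a) + γ' * d) := by ring
      have e3 : (Finsupp.single (0 : Fin 2) (α * d + β * a)
            + Finsupp.single 1 (β * (d - a) + γ * d))
          + (Finsupp.single 0 (α' * d + β' * a) + Finsupp.single 1 (β' * (d - a) + γ' * d))
          = Finsupp.single 0 ((α + α') * d + (β + β') * a)
            + Finsupp.single 1 ((β + β') * (d - a) + (γ + γ') * d) := by
        ext i
        fin_cases i <;>
          simp [Finsupp.single_apply, e1, e2]
      rw [monomial_mul, one_mul, e3]

private lemma rn_coeff_form {k : Type*} [Field k] (a d : ℕ)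
    (z : MvPolynomial (Fin 2) k)
    (hz : z ∈ Algebra.adjoin k
      {(X 0 : MvPolynomial (Fin 2) k) ^ d, X 0 ^ a * X 1 ^ (d - a), X 1 ^ d})
    (e : Fin 2 →₀ ℕ) (he : coeff e z ≠ 0) :
    ∃ α β γ : ℕ, e = Finsupp.single 0 (α * d + β * a)
      + Finsupp.single 1 (β * (d - a) + γ * d) := by
  rw [← Subalgebra.mem_toSubmodule, Algebra.adjoin_eq_span] at hz
  revert he
  refine Submodule.span_induction ?_ ?_ ?_ ?_ hz
  · intro x hx hne
    obtain ⟨α, β, γ, rfl⟩ := rn_closure_form a d x hx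
    refine ⟨α, β, γ, ?_⟩
    rw [coeff_monomial] at hne
    by_contra hc
    rw [if_neg (fun h => hc h.symm)] at hne
    exact hne rfl
  · intro hne; simp at hne
  · intro x y hxm hym hx hy hne
    rw [coeff_add] at hne
    by_cases hcx : coeff e x = 0
    · exact hy (by rw [hcx, zero_add] at hne; exact hne)
    · exact hx hcx
  · intro c x hxm hx hne
    rw [coeff_smul] at hne
    exact hx (fun h0 => hne (by rw [h0, smul_zero]))
private lemma rn_extract {k : Type*} [Field k] (a d : ℕ)
    (z : MvPolynomial (Fin 2) k)
    (hz : z ∈ Algebra.adjoin k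
      {(X 0 : MvPolynomial (Fin 2) k) ^ d, X 0 ^ a * X 1 ^ (d - a), X 1 ^ d})
    (s m : Fin 2 →₀ ℕ)
    (heq : (monomial m (1 : k)) = monomial s 1 * z) :
    s ≤ m ∧ ∃ α β γ : ℕ, m - s = Finsupp.single 0 (α * d + β * a)
      + Finsupp.single 1 (β * (d - a) + γ * d) := by
  have h1 : coeff m ((monomial s (1 : k)) * z) = 1 := by
    rw [← heq, coeff_monomial, if_pos rfl]
  rw [coeff_monomial_mul'] at h1
  by_cases hle : s ≤ m
  · rw [if_pos hle, one_mul] at h1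
    exact ⟨hle, rn_coeff_form a d z hz (m - s) (h1 ▸ one_ne_zero)⟩
  · rw [if_neg hle] at h1
    exact absurd h1 zero_ne_one

/-- Proposition 3.1: for `2 ≤ a < d` with `d ≥ a+2`, `R = k[x^d, x^a y^{d-a}, y^d]` and
`Q = (x^d, y^d)`, the reduction number `r_Q(R₊)` — which is the least `n` such that
`(x^a y^{d-a})^{n+1}` is divisible in `R` by `x^d` or by `y^d` — equals
`d / gcd(a,d) - 1`. -/
theorem reduction_number_three_monomials (k : Type*) [Field k]
    (a d : ℕ) (ha : 2 ≤ a) (had : a < d) (h2 : a + 2 ≤ d)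
    (R : Subalgebra k (MvPolynomial (Fin 2) k))
    (hR : R = Algebra.adjoin k
      {(X 0 : MvPolynomial (Fin 2) k) ^ d, X 0 ^ a * X 1 ^ (d - a), X 1 ^ d}) :
    sInf {n : ℕ |
        (∃ z ∈ R, ((X 0 : MvPolynomial (Fin 2) k) ^ a * X 1 ^ (d - a)) ^ (n + 1)
            = X 0 ^ d * z) ∨
        (∃ z ∈ R, ((X 0 : MvPolynomial (Fin 2) k) ^ a * X 1 ^ (d - a)) ^ (n + 1)
            = X 1 ^ d * z)} =
      d / Nat.gcd a d - 1 := by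
  have hdpos : 0 < d := by omega
  set g := Nat.gcd a d with hg
  have hgpos : 0 < g := Nat.gcd_pos_of_pos_right a hdpos
  have hgd : g ∣ d := Nat.gcd_dvd_right a d
  have hga : g ∣ a := Nat.gcd_dvd_left a d
  set d' := d / g with hd'
  set a' := a / g with ha'
  have hda : d = g * d' := (Nat.mul_div_cancel' hgd).symm
  have haa : a = g * a' := (Nat.mul_div_cancel' hga).symm
  have ha'pos : 0 < a' := Nat.div_pos (Nat.le_of_dvd (by omega) hga) hgpos
  have ha'd' : a' < d' := by
    have h : g * a' < g * d' := by omega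
    exact lt_of_mul_lt_mul_left h (Nat.zero_le g)
  have key1 : a * d' = a' * d := by
    have h : (a * d') * g = (a' * d) * g := by
      calc (a * d') * g = a * (g * d') := by ring
        _ = a * d := by rw [← hda]
        _ = (g * a') * d := by rw [← haa]
        _ = (a' * d) * g := by ring
    exact Nat.eq_of_mul_eq_mul_right hgpos h
  have key2 : (d - a) * d' = (d' - a') * d := by
    rw [Nat.sub_mul, Nat.sub_mul, key1, mul_comm d d']
  -- membership of d' - 1 in the set
  have hmem : (d' - 1) ∈ {n : ℕ |
        (∃ z ∈ R, ((X 0 : MvPolynomial (Fin 2) k) ^ a * X 1 ^ (d - a)) ^ (n + 1)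
            = X 0 ^ d * z) ∨
        (∃ z ∈ R, ((X 0 : MvPolynomial (Fin 2) k) ^ a * X 1 ^ (d - a)) ^ (n + 1)
            = X 1 ^ d * z)} := by
    left
    have h1 : (X 0 : MvPolynomial (Fin 2) k) ^ d ∈ R := by
      rw [hR]; exact Algebra.subset_adjoin (Set.mem_insert _ _)
    have h2 : (X 1 : MvPolynomial (Fin 2) k) ^ d ∈ R := by
      rw [hR]
      exact Algebra.subset_adjoin (Set.mem_insert_of_mem _ (Set.mem_insert_of_mem _ rfl))
    refine ⟨(X 0 ^ d) ^ (a' - 1) * (X 1 ^ d) ^ (d' - a'),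
      mul_mem (pow_mem h1 _) (pow_mem h2 _), ?_⟩
    have hn1 : d' - 1 + 1 = d' := by omega
    rw [hn1, mul_pow, ← pow_mul, ← pow_mul, ← pow_mul, ← pow_mul,
      ← mul_assoc, ← pow_add]
    have ex1 : a * d' = d + d * (a' - 1) := by
      rw [key1, Nat.mul_sub, mul_comm a' d]
      have h : d ≤ d * a' := Nat.le_mul_of_pos_right d ha'pos
      omega
    have ex2 : (d - a) * d' = d * (d' - a') := by
      rw [key2, mul_comm]
    rw [ex1, ex2]
  apply le_antisymm (Nat.sInf_le hmem)
  refine le_csInf ⟨_, hmem⟩ ?_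
  intro n hn
  have hkey : d' ≤ n + 1 := by
    have hM : ((X 0 : MvPolynomial (Fin 2) k) ^ a * X 1 ^ (d - a)) ^ (n + 1)
        = monomial (Finsupp.single 0 (a * (n + 1)) + Finsupp.single 1 ((d - a) * (n + 1)))
          (1 : k) := by
      rw [mul_pow, ← pow_mul, ← pow_mul, X_pow_eq_monomial, X_pow_eq_monomial,
        monomial_mul, one_mul]
    set m : Fin 2 →₀ ℕ :=
      Finsupp.single 0 (a * (n + 1)) + Finsupp.single 1 ((d - a) * (n + 1)) with hm
    rcases hn with ⟨z, hzR, heq⟩ | ⟨z, hzR, heq⟩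
    · -- x-case : divisible by X 0 ^ d
      rw [hR] at hzR
      have hex := rn_extract a d z hzR (Finsupp.single 0 d) m
        (by rw [← hM, ← X_pow_eq_monomial, heq])
      obtain ⟨hle, α, β, γ, hes⟩ := hex
      have hle0 : d ≤ a * (n + 1) := by
        have := Finsupp.le_def.mp hle 0
        simpa [hm, Finsupp.single_apply] using this
      have eq1 : α * d + β * a + d = a * (n + 1) := by
        have := DFunLike.congr_fun hes 0
        simp [hm, Finsupp.single_apply] at this
        omega
      have eq2 : β * (d - a) + γ * d = (d - a) * (n + 1) := by
        have := DFunLike.congr_fun hes 1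
        simp [hm, Finsupp.single_apply] at this
        omega
      have hβ : β ≤ n + 1 := by
        have hle' : β * (d - a) ≤ (n + 1) * (d - a) := by
          rw [mul_comm (n + 1) (d - a)]; omega
        exact Nat.le_of_mul_le_mul_right hle' (by omega)
      obtain ⟨t, ht⟩ : ∃ t, n + 1 = β + t := ⟨n + 1 - β, by omega⟩
      have hat : a * t = (α + 1) * d := by
        have h : α * d + β * a + d = a * β + a * t := by
          rw [eq1, ht, Nat.mul_add]
        have hc : β * a = a * β := mul_comm _ _
        have hd2 : (α + 1) * d = α * d + d := by ring
        omega
      have htpos : 0 < t := by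
        rcases Nat.eq_zero_or_pos t with h0 | h0
        · exfalso
          rw [h0, Nat.mul_zero] at hat
          have : 0 < (α + 1) * d := Nat.mul_pos (by omega) hdpos
          omega
        · exact h0
      exact rn_div_gcd_le a d t n hdpos htpos (by omega) ⟨α + 1, by rw [hat, mul_comm]⟩
    · -- y-case : divisible by X 1 ^ d
      rw [hR] at hzR
      have hex := rn_extract a d z hzR (Finsupp.single 1 d) m
        (by rw [← hM, ← X_pow_eq_monomial, heq])
      obtain ⟨hle, α, β, γ, hes⟩ := hex
      have hle1 : d ≤ (d - a) * (n + 1) := by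
        have := Finsupp.le_def.mp hle 1
        simpa [hm, Finsupp.single_apply] using this
      have eq1 : α * d + β * a = a * (n + 1) := by
        have := DFunLike.congr_fun hes 0
        simp [hm, Finsupp.single_apply] at this
        omega
      have eq2 : β * (d - a) + γ * d + d = (d - a) * (n + 1) := by
        have := DFunLike.congr_fun hes 1
        simp [hm, Finsupp.single_apply] at this
        omega
      have hβ : β ≤ n + 1 := by
        have hle' : β * a ≤ (n + 1) * a := by
          rw [mul_comm (n + 1) a]; omega
        exact Nat.le_of_mul_le_mul_right hle' (by omega)
      obtain ⟨t, ht⟩ : ∃ t, n + 1 = β + t := ⟨n + 1 - β, by omega⟩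
      have hdat : (d - a) * t = (γ + 1) * d := by
        have h : β * (d - a) + γ * d + d = (d - a) * β + (d - a) * t := by
          rw [eq2, ht, Nat.mul_add]
        have hc : β * (d - a) = (d - a) * β := mul_comm _ _
        have hd2 : (γ + 1) * d = γ * d + d := by ring
        omega
      have htpos : 0 < t := by
        rcases Nat.eq_zero_or_pos t with h0 | h0
        · exfalso
          rw [h0, Nat.mul_zero] at hdat
          have : 0 < (γ + 1) * d := Nat.mul_pos (by omega) hdpos
          omega
        · exact h0
      have hdvd : d ∣ a * t := by
        have h1 : d ∣ d * t := dvd_mul_right d t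
        have h2 : d ∣ (d - a) * t := ⟨γ + 1, by rw [hdat, mul_comm]⟩
        have h3 : a * t = d * t - (d - a) * t := by
          rw [← Nat.sub_mul]
          congr 1
          omega
        rw [h3]
        exact Nat.dvd_sub h1 h2
      exact rn_div_gcd_le a d t n hdpos htpos (by omega) hdvd
  omega
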